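/- Let A, M̃, X be SPD with (M̃v, v) ≤ σ(Xv, v) for all v. Let P be full rank and R satisfy RP = I. Then ‖(I - Π_{M̃}(P))v‖²_{M̃} ≤ σ‖(I - PR)v‖²_X for all v, where Π_{M̃}(P) is the M̃-orthogonal projection onto range(P). Consequently, if sup_v ‖(I-PR)v‖²_X/‖v‖²_A ≤ η then the two-grid convergence measure satisfies sup_v ‖(I-Π_{M̃}(P))v‖²_{M̃}/‖v‖²_A ≤ ση. -/

import Mathlib

open Matrix

private lemma helper_dot {n m : ℕ} (B : Matrix (Fin m) (Fin n) ℝ)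
    (C : Matrix (Fin m) (Fin m) ℝ) (w : Fin n → ℝ) :
    w ⬝ᵥ (Bᵀ * C * B) *ᵥ w = (B *ᵥ w) ⬝ᵥ C *ᵥ (B *ᵥ w) := by
  rw [Matrix.mul_assoc, ← Matrix.mulVec_mulVec, Matrix.dotProduct_mulVec,
    Matrix.vecMul_transpose, Matrix.mulVec_mulVec]

/-- If `vᵀM̃v ≤ σ vᵀXv` for all `v`, `P` is full rank and `RP = I`, then
`‖(I - Π_M̃(P))v‖²_M̃ ≤ σ‖(I - PR)v‖²_X` for all `v`; consequently, if
`sup_v ‖(I-PR)v‖²_X/‖v‖²_A ≤ η` then `sup_v ‖(I-Π_M̃(P))v‖²_M̃/‖v‖²_A ≤ ση`. -/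
theorem weak_approximation_transfer {n nc : ℕ}
    (A Mt X : Matrix (Fin n) (Fin n) ℝ)
    (hA : A.PosDef) (hMt : Mt.PosDef) (hX : X.PosDef) (σ : ℝ)
    (hσ : ∀ v : Fin n → ℝ, v ⬝ᵥ Mt.mulVec v ≤ σ * (v ⬝ᵥ X.mulVec v))
    (P : Matrix (Fin n) (Fin nc) ℝ) (hP : P.rank = nc)
    (R : Matrix (Fin nc) (Fin n) ℝ) (hRP : R * P = 1) :
    (∀ v : Fin n → ℝ,
      ((1 - P * (Pᵀ * Mt * P)⁻¹ * Pᵀ * Mt).mulVec v) ⬝ᵥ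
          Mt.mulVec ((1 - P * (Pᵀ * Mt * P)⁻¹ * Pᵀ * Mt).mulVec v)
        ≤ σ * (((1 - P * R).mulVec v) ⬝ᵥ X.mulVec ((1 - P * R).mulVec v))) ∧
    (∀ η : ℝ,
      (∀ v : Fin n → ℝ, v ≠ 0 →
        (((1 - P * R).mulVec v) ⬝ᵥ X.mulVec ((1 - P * R).mulVec v)) /
          (v ⬝ᵥ A.mulVec v) ≤ η) →
      ∀ v : Fin n → ℝ, v ≠ 0 →
        (((1 - P * (Pᵀ * Mt * P)⁻¹ * Pᵀ * Mt).mulVec v) ⬝ᵥ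
            Mt.mulVec ((1 - P * (Pᵀ * Mt * P)⁻¹ * Pᵀ * Mt).mulVec v)) /
          (v ⬝ᵥ A.mulVec v) ≤ σ * η) := by
  have hMtsymm : Mtᵀ = Mt := hMt.isHermitian
  -- P has trivial kernel thanks to R
  have hPinj : ∀ x : Fin nc → ℝ, P *ᵥ x = 0 → x = 0 := by
    intro x hx
    have h := congrArg (R *ᵥ ·) hx
    simpa [Matrix.mulVec_mulVec, hRP] using h
  -- S := Pᵀ Mt P is positive definite
  have hSpd : (Pᵀ * Mt * P).PosDef := by
    refine Matrix.PosDef.of_dotProduct_mulVec_pos ?_ ?_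
    · have h := Matrix.isHermitian_conjTranspose_mul_mul P hMt.isHermitian
      simpa using h
    · intro x hx
      have hPx : P *ᵥ x ≠ 0 := fun h => hx (hPinj x h)
      have h := hMt.dotProduct_mulVec_pos hPx
      simpa [helper_dot P Mt x] using h
  have hSunit : IsUnit (Pᵀ * Mt * P).det := isUnit_iff_ne_zero.mpr hSpd.det_pos.ne'
  have hSinvS : (Pᵀ * Mt * P)⁻¹ * (Pᵀ * Mt * P) = 1 := Matrix.nonsing_inv_mul _ hSunit
  have hSsymm : (Pᵀ * Mt * P)ᵀ = Pᵀ * Mt * P := hSpd.isHermitian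
  have hSinvSymm : ((Pᵀ * Mt * P)⁻¹)ᵀ = (Pᵀ * Mt * P)⁻¹ := by
    rw [Matrix.transpose_nonsing_inv, hSsymm]
  have hassoc : Pᵀ * Mt * P = Pᵀ * (Mt * P) := Matrix.mul_assoc _ _ _
  have hSinvS' : (Pᵀ * (Mt * P))⁻¹ * (Pᵀ * (Mt * P)) = 1 := by
    rw [← hassoc]; exact hSinvS
  have hSinvSymm' : ((Pᵀ * (Mt * P))⁻¹)ᵀ = (Pᵀ * (Mt * P))⁻¹ := by
    rw [← hassoc]; exact hSinvSymm
  -- general cancellation lemma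
  have cancel : ∀ {k : ℕ} (Z : Matrix (Fin nc) (Fin k) ℝ),
      (Pᵀ * (Mt * P))⁻¹ * (Pᵀ * (Mt * (P * Z))) = Z := by
    intro k Z
    calc (Pᵀ * (Mt * P))⁻¹ * (Pᵀ * (Mt * (P * Z)))
        = ((Pᵀ * (Mt * P))⁻¹ * (Pᵀ * (Mt * P))) * Z := by
          simp only [Matrix.mul_assoc]
      _ = Z := by rw [hSinvS', Matrix.one_mul]
  have cancel1 : (Pᵀ * (Mt * P))⁻¹ * (Pᵀ * (Mt * P)) = 1 := hSinvS'
  set E : Matrix (Fin n) (Fin n) ℝ := 1 - P * (Pᵀ * Mt * P)⁻¹ * Pᵀ * Mt with hEdef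
  -- E kills range(P)
  have hEP : E * P = 0 := by
    rw [hEdef]
    simp only [Matrix.sub_mul, Matrix.one_mul, Matrix.mul_assoc]
    rw [cancel1, Matrix.mul_one, sub_self]
  have hEF : E * (1 - P * R) = E := by
    rw [Matrix.mul_sub, Matrix.mul_one, ← Matrix.mul_assoc, hEP, Matrix.zero_mul,
      sub_zero]
  -- key identity : Eᵀ Mt E = Mt - (Pᵀ Mt)ᵀ (Pᵀ Mt P)⁻¹ (Pᵀ Mt)
  have hkey : Eᵀ * Mt * E = Mt - (Pᵀ * Mt)ᵀ * (Pᵀ * Mt * P)⁻¹ * (Pᵀ * Mt) := by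
    have hD : (Pᵀ * Mt)ᵀ * (Pᵀ * Mt * P)⁻¹ * (Pᵀ * Mt)
        = Mt * (P * ((Pᵀ * Mt * P)⁻¹ * (Pᵀ * Mt))) := by
      simp only [Matrix.transpose_mul, Matrix.transpose_transpose, hMtsymm,
        Matrix.mul_assoc]
    have hEt : Eᵀ = 1 - Mt * (P * ((Pᵀ * Mt * P)⁻¹ * Pᵀ)) := by
      rw [hEdef]
      simp only [Matrix.transpose_sub, Matrix.transpose_one, Matrix.transpose_mul,
        Matrix.transpose_transpose, hMtsymm, Matrix.mul_assoc, hSinvSymm']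
    rw [hEt, hEdef, hD]
    simp only [Matrix.sub_mul, Matrix.mul_sub, Matrix.one_mul, Matrix.mul_one,
      Matrix.mul_assoc]
    rw [cancel]
    abel
  -- contraction property of E in the Mt inner product
  have hcontr : ∀ w : Fin n → ℝ, (E *ᵥ w) ⬝ᵥ Mt *ᵥ (E *ᵥ w) ≤ w ⬝ᵥ Mt *ᵥ w := by
    intro w
    have h1 : (E *ᵥ w) ⬝ᵥ Mt *ᵥ (E *ᵥ w) = w ⬝ᵥ (Eᵀ * Mt * E) *ᵥ w :=
      (helper_dot E Mt w).symm
    have h2 : (0:ℝ) ≤ w ⬝ᵥ ((Pᵀ * Mt)ᵀ * (Pᵀ * Mt * P)⁻¹ * (Pᵀ * Mt)) *ᵥ w := by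
      rw [helper_dot]
      have h := (hSpd.posSemidef.inv).dotProduct_mulVec_nonneg ((Pᵀ * Mt) *ᵥ w)
      simpa using h
    rw [h1, hkey, Matrix.sub_mulVec, dotProduct_sub]
    linarith
  -- main inequality
  have main : ∀ v : Fin n → ℝ,
      ((1 - P * (Pᵀ * Mt * P)⁻¹ * Pᵀ * Mt) *ᵥ v) ⬝ᵥ
        Mt *ᵥ ((1 - P * (Pᵀ * Mt * P)⁻¹ * Pᵀ * Mt) *ᵥ v)
      ≤ σ * (((1 - P * R) *ᵥ v) ⬝ᵥ X *ᵥ ((1 - P * R) *ᵥ v)) := by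
    intro v
    set w : Fin n → ℝ := (1 - P * R) *ᵥ v with hw
    have hEv : E *ᵥ v = E *ᵥ w := by
      rw [hw, Matrix.mulVec_mulVec, hEF]
    calc (E *ᵥ v) ⬝ᵥ Mt *ᵥ (E *ᵥ v)
        = (E *ᵥ w) ⬝ᵥ Mt *ᵥ (E *ᵥ w) := by rw [hEv]
      _ ≤ w ⬝ᵥ Mt *ᵥ w := hcontr w
      _ ≤ σ * (w ⬝ᵥ X *ᵥ w) := hσ w
  refine ⟨main, ?_⟩
  intro η hη v hv
  have hd : 0 < v ⬝ᵥ A *ᵥ v := by simpa using hA.dotProduct_mulVec_pos hv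
  have hXv : 0 < v ⬝ᵥ X *ᵥ v := by simpa using hX.dotProduct_mulVec_pos hv
  have hMv : 0 < v ⬝ᵥ Mt *ᵥ v := by simpa using hMt.dotProduct_mulVec_pos hv
  have hσpos : 0 < σ := by
    by_contra h
    push_neg at h
    have : σ * (v ⬝ᵥ X *ᵥ v) ≤ 0 := mul_nonpos_of_nonpos_of_nonneg h hXv.le
    linarith [hσ v]
  set w : Fin n → ℝ := (1 - P * R) *ᵥ v with hw
  have h1 : (((1 - P * (Pᵀ * Mt * P)⁻¹ * Pᵀ * Mt) *ᵥ v) ⬝ᵥ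
      Mt *ᵥ ((1 - P * (Pᵀ * Mt * P)⁻¹ * Pᵀ * Mt) *ᵥ v)) / (v ⬝ᵥ A *ᵥ v)
      ≤ (σ * (w ⬝ᵥ X *ᵥ w)) / (v ⬝ᵥ A *ᵥ v) := by
    gcongr
    exact main v
  have h3 : (w ⬝ᵥ X *ᵥ w) / (v ⬝ᵥ A *ᵥ v) ≤ η := hη v hv
  calc (((1 - P * (Pᵀ * Mt * P)⁻¹ * Pᵀ * Mt) *ᵥ v) ⬝ᵥ
      Mt *ᵥ ((1 - P * (Pᵀ * Mt * P)⁻¹ * Pᵀ * Mt) *ᵥ v)) / (v ⬝ᵥ A *ᵥ v)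
      ≤ (σ * (w ⬝ᵥ X *ᵥ w)) / (v ⬝ᵥ A *ᵥ v) := h1
    _ = σ * ((w ⬝ᵥ X *ᵥ w) / (v ⬝ᵥ A *ᵥ v)) := mul_div_assoc _ _ _
    _ ≤ σ * η := mul_le_mul_of_nonneg_left h3 hσpos.le
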